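/- Suppose 0 < α < 1, b is an even positive integer, and b^{1−α} > 2. Then the function Φ is strictly C^{0,α} on ℝ. -/

import Mathlib

open Set Filter Topology

/-- The sawtooth function `φ(x) = dist(x, 2ℤ)`. -/
noncomputable def sawtooth (x : ℝ) : ℝ :=
  Metric.infDist x {y : ℝ | ∃ m : ℤ, y = 2 * m}

/-- Katzourakis' function `Φ(x) = Σ_{k=0}^∞ b^{-kα} φ(b^k x)`. -/
noncomputable def Phi (b : ℕ) (α : ℝ) (x : ℝ) : ℝ :=
  ∑' k : ℕ, (b : ℝ) ^ (-((k : ℝ) * α)) * sawtooth ((b : ℝ) ^ k * x)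

/-- `f : ℝ → ℝ` is strictly `C^{0,α}`: it is `α`-Hölder with some constant `C > 0`, and for
every `β > α` and every `y`, `limsup_{x→y} |f x - f y| / |x - y|^β = ∞` (i.e. the difference
quotients are frequently larger than any bound near `y`). -/
def StrictlyHolder (f : ℝ → ℝ) (α : ℝ) : Prop :=
  (∃ C : ℝ, 0 < C ∧ ∀ x y : ℝ, |f x - f y| ≤ C * |x - y| ^ α) ∧
  ∀ β : ℝ, α < β → ∀ y M : ℝ, ∃ᶠ x in 𝓝[≠] y, M < |f x - f y| / |x - y| ^ β

lemma sawtooth_nonneg (x : ℝ) : 0 ≤ sawtooth x := Metric.infDist_nonneg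

lemma sawtooth_le_dist (x : ℝ) (m : ℤ) : sawtooth x ≤ |x - 2 * m| := by
  have hm : (2 * (m : ℝ)) ∈ {y : ℝ | ∃ m : ℤ, y = 2 * m} := ⟨m, rfl⟩
  simpa [sawtooth, Real.dist_eq] using Metric.infDist_le_dist_of_mem hm

lemma sawtooth_le_one (x : ℝ) : sawtooth x ≤ 1 := by
  have h1 := sawtooth_le_dist x (round (x / 2))
  have h2 : |x / 2 - round (x / 2)| ≤ 1 / 2 := abs_sub_round (x / 2)
  have h3 : |x - 2 * round (x / 2)| = 2 * |x / 2 - round (x / 2)| := by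
    rw [show x - 2 * (round (x / 2) : ℝ) = 2 * (x / 2 - round (x / 2)) by ring, abs_mul]
    norm_num
  linarith [h1, h3 ▸ h1]

lemma sawtooth_lip (x y : ℝ) : |sawtooth x - sawtooth y| ≤ |x - y| := by
  have h1 : sawtooth x ≤ sawtooth y + dist x y := Metric.infDist_le_infDist_add_dist
  have h2 : sawtooth y ≤ sawtooth x + dist y x := Metric.infDist_le_infDist_add_dist
  rw [Real.dist_eq] at h1
  rw [Real.dist_eq, abs_sub_comm] at h2
  rw [abs_sub_le_iff]
  constructor <;> linarith

lemma sawtooth_int_even {j : ℤ} (h : Even j) : sawtooth (j : ℝ) = 0 := by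
  obtain ⟨m, rfl⟩ := h
  apply Metric.infDist_zero_of_mem
  exact ⟨m, by push_cast; ring⟩

lemma sawtooth_int_odd {j : ℤ} (h : ¬ Even j) : sawtooth (j : ℝ) = 1 := by
  rw [Int.not_even_iff_odd] at h
  obtain ⟨m, rfl⟩ := h
  refine le_antisymm ?_ ?_
  · have := sawtooth_le_dist ((2 * m + 1 : ℤ) : ℝ) m
    push_cast at this ⊢
    simpa using this
  · by_contra hlt
    push_neg at hlt
    have hne : ({y : ℝ | ∃ m : ℤ, y = 2 * m}).Nonempty := ⟨0, 0, by norm_num⟩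
    obtain ⟨z, ⟨m', rfl⟩, hz⟩ := (Metric.infDist_lt_iff hne).1 hlt
    rw [Real.dist_eq] at hz
    have : ((2 * m + 1 : ℤ) : ℝ) - 2 * (m' : ℝ) = ((2 * (m - m') + 1 : ℤ) : ℝ) := by
      push_cast; ring
    rw [this] at hz
    rw [← Int.cast_abs] at hz
    have h1 : (1 : ℤ) ≤ |2 * (m - m') + 1| := Int.one_le_abs (by omega)
    exact absurd hz (not_lt.2 (by exact_mod_cast h1))

lemma sawtooth_succ_int (j : ℤ) : |sawtooth ((j : ℝ) + 1) - sawtooth (j : ℝ)| = 1 := by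
  have : ((j : ℝ) + 1) = ((j + 1 : ℤ) : ℝ) := by push_cast; ring
  rw [this]
  rcases Int.even_or_odd j with h | h
  · rw [sawtooth_int_even h, sawtooth_int_odd (by rw [Int.even_add_one]; simpa using h)]
    norm_num
  · rw [sawtooth_int_odd (Int.not_even_iff_odd.2 h),
      sawtooth_int_even (by rw [Int.even_add_one]; exact Int.not_even_iff_odd.2 h)]
    norm_num

lemma pow_rpow_comm {x : ℝ} (hx : 0 ≤ x) (n : ℕ) (γ : ℝ) : (x ^ n) ^ γ = (x ^ γ) ^ n := by
  rw [← Real.rpow_natCast x n, ← Real.rpow_mul hx, mul_comm, Real.rpow_mul hx,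
    Real.rpow_natCast]

noncomputable def gg (b : ℕ) (α : ℝ) (k : ℕ) (x : ℝ) : ℝ :=
  ((b : ℝ) ^ (-α)) ^ k * sawtooth ((b : ℝ) ^ k * x)

lemma phi_eq (b : ℕ) (α : ℝ) (x : ℝ) : Phi b α x = ∑' k, gg b α k x := by
  unfold Phi gg
  congr 1; funext k
  congr 1
  rw [← Real.rpow_natCast ((b:ℝ) ^ (-α)) k, ← Real.rpow_mul (Nat.cast_nonneg b)]
  ring_nf

section
variable {b : ℕ} {α : ℝ} (hb1 : 1 < (b : ℝ)) (hα0 : 0 < α)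

lemma r_pos (hb1 : 1 < (b : ℝ)) : 0 < (b : ℝ) ^ (-α) :=
  Real.rpow_pos_of_pos (lt_trans one_pos hb1) _

lemma r_lt_one (hb1 : 1 < (b : ℝ)) (hα0 : 0 < α) : (b : ℝ) ^ (-α) < 1 :=
  Real.rpow_lt_one_of_one_lt_of_neg hb1 (neg_lt_zero.2 hα0)

lemma gg_abs_le (hb1 : 1 < (b : ℝ)) (k : ℕ) (x : ℝ) :
    |gg b α k x| ≤ ((b : ℝ) ^ (-α)) ^ k := by
  have hr := (r_pos (α := α) hb1).le
  rw [gg, abs_mul, abs_of_nonneg (pow_nonneg hr k),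
    abs_of_nonneg (sawtooth_nonneg _)]
  calc ((b:ℝ) ^ (-α)) ^ k * sawtooth ((b:ℝ) ^ k * x)
      ≤ ((b:ℝ) ^ (-α)) ^ k * 1 := by
        exact mul_le_mul_of_nonneg_left (sawtooth_le_one _) (pow_nonneg hr k)
    _ = ((b:ℝ) ^ (-α)) ^ k := mul_one _

lemma summable_gg (hb1 : 1 < (b : ℝ)) (hα0 : 0 < α) (x : ℝ) :
    Summable (fun k => gg b α k x) :=
  Summable.of_norm_bounded (summable_geometric_of_lt_one (r_pos hb1).le
    (r_lt_one hb1 hα0)) (fun k => gg_abs_le hb1 k x)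

lemma gg_diff_le_geom (hb1 : 1 < (b : ℝ)) (k : ℕ) (x y : ℝ) :
    |gg b α k x - gg b α k y| ≤ ((b : ℝ) ^ (-α)) ^ k := by
  have hr := (r_pos (α := α) hb1).le
  have h1 : |sawtooth ((b:ℝ) ^ k * x) - sawtooth ((b:ℝ) ^ k * y)| ≤ 1 := by
    rw [abs_sub_le_iff]
    constructor <;>
      linarith [sawtooth_nonneg ((b:ℝ) ^ k * x), sawtooth_le_one ((b:ℝ) ^ k * x),
        sawtooth_nonneg ((b:ℝ) ^ k * y), sawtooth_le_one ((b:ℝ) ^ k * y)]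
  rw [gg, gg, ← mul_sub, abs_mul, abs_of_nonneg (pow_nonneg hr k)]
  calc ((b:ℝ) ^ (-α)) ^ k * |sawtooth ((b:ℝ) ^ k * x) - sawtooth ((b:ℝ) ^ k * y)|
      ≤ ((b:ℝ) ^ (-α)) ^ k * 1 := mul_le_mul_of_nonneg_left h1 (pow_nonneg hr k)
    _ = _ := mul_one _

lemma gg_diff_le_lip (hb1 : 1 < (b : ℝ)) (k : ℕ) (x y : ℝ) :
    |gg b α k x - gg b α k y| ≤ ((b : ℝ) ^ (1 - α)) ^ k * |x - y| := by
  have hB0 : (0:ℝ) < b := lt_trans one_pos hb1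
  have hr := (r_pos (α := α) hb1).le
  have h1 : |sawtooth ((b:ℝ) ^ k * x) - sawtooth ((b:ℝ) ^ k * y)| ≤ (b:ℝ) ^ k * |x - y| := by
    have := sawtooth_lip ((b:ℝ) ^ k * x) ((b:ℝ) ^ k * y)
    rw [← mul_sub, abs_mul, abs_of_nonneg (pow_nonneg hB0.le k)] at this
    exact this
  rw [gg, gg, ← mul_sub, abs_mul, abs_of_nonneg (pow_nonneg hr k)]
  calc ((b:ℝ) ^ (-α)) ^ k * |sawtooth ((b:ℝ) ^ k * x) - sawtooth ((b:ℝ) ^ k * y)|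
      ≤ ((b:ℝ) ^ (-α)) ^ k * ((b:ℝ) ^ k * |x - y|) :=
        mul_le_mul_of_nonneg_left h1 (pow_nonneg hr k)
    _ = (((b:ℝ) ^ (-α)) * (b:ℝ)) ^ k * |x - y| := by rw [mul_pow]; ring
    _ = ((b:ℝ) ^ (1 - α)) ^ k * |x - y| := by
        congr 2
        rw [show (1:ℝ) - α = (-α) + 1 by ring, Real.rpow_add hB0, Real.rpow_one]

end

lemma phi_holder {b : ℕ} {α : ℝ} (hb1 : 1 < (b : ℝ)) (hα0 : 0 < α) (hα1 : α < 1)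
    (hb2 : 2 < (b : ℝ) ^ (1 - α)) :
    ∃ C : ℝ, 0 < C ∧ ∀ x y : ℝ, |Phi b α x - Phi b α y| ≤ C * |x - y| ^ α := by
  set B : ℝ := (b : ℝ) with hB
  have hB0 : (0:ℝ) < B := lt_trans one_pos hb1
  set r : ℝ := B ^ (-α) with hr
  set sB : ℝ := B ^ (1 - α) with hsB
  have hr0 : 0 < r := r_pos hb1
  have hr1 : r < 1 := r_lt_one hb1 hα0
  have hsB0 : 0 < sB := Real.rpow_pos_of_pos hB0 _
  have hsB1 : (0:ℝ) < sB - 1 := by linarith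
  have h1r : (0:ℝ) < 1 - r := by linarith
  refine ⟨sB / (sB - 1) + (1 - r)⁻¹, by positivity, fun x y => ?_⟩
  rcases eq_or_ne x y with rfl | hxy
  · simp [Real.zero_rpow (ne_of_gt hα0)]
  set h : ℝ := |x - y| with hh
  have h0 : 0 < h := abs_pos.2 (sub_ne_zero.2 hxy)
  set F : ℕ → ℝ := fun k => |gg b α k x - gg b α k y| with hF
  have hFsum : Summable F :=
    Summable.of_nonneg_of_le (fun k => abs_nonneg _) (fun k => gg_diff_le_geom hb1 k x y)
      (summable_geometric_of_lt_one hr0.le hr1)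
  have hdiff : |Phi b α x - Phi b α y| ≤ ∑' k, F k := by
    rw [phi_eq, phi_eq, ← Summable.tsum_sub (summable_gg hb1 hα0 x) (summable_gg hb1 hα0 y)]
    simpa [hF, Real.norm_eq_abs] using
      norm_tsum_le_tsum_norm (f := fun k => gg b α k x - gg b α k y)
        (by simpa [Real.norm_eq_abs] using hFsum)
  have hBinv : B⁻¹ < 1 := inv_lt_one_of_one_lt₀ hb1
  have hBinv0 : (0:ℝ) ≤ B⁻¹ := by positivity
  have HN : ∃ n : ℕ, B⁻¹ ^ n ≤ h := by
    obtain ⟨n, hn⟩ := exists_pow_lt_of_lt_one h0 hBinv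
    exact ⟨n, hn.le⟩
  obtain ⟨N, hN, hNmin⟩ : ∃ N : ℕ, B⁻¹ ^ N ≤ h ∧ ∀ m < N, h < B⁻¹ ^ m :=
    ⟨Nat.find HN, Nat.find_spec HN, fun m hm => lt_of_not_ge (Nat.find_min HN hm)⟩
  have hsplit := Summable.sum_add_tsum_nat_add N hFsum
  have hra : r = B⁻¹ ^ α := by
    rw [hr, Real.inv_rpow hB0.le, Real.rpow_neg hB0.le]
  have hrN : r ^ N ≤ h ^ α := by
    rw [hra, ← pow_rpow_comm hBinv0]
    exact Real.rpow_le_rpow (pow_nonneg hBinv0 N) hN hα0.le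
  have htail : ∑' k, F (k + N) ≤ (1 - r)⁻¹ * h ^ α := by
    have h1 : ∑' k, F (k + N) ≤ ∑' k : ℕ, r ^ N * r ^ k := by
      refine Summable.tsum_le_tsum (fun k => ?_) ((summable_nat_add_iff N).2 hFsum)
        ((summable_geometric_of_lt_one hr0.le hr1).mul_left _)
      calc F (k + N) ≤ r ^ (k + N) := gg_diff_le_geom hb1 (k + N) x y
        _ = r ^ N * r ^ k := by rw [pow_add]; ring
    have h2 : ∑' k : ℕ, r ^ N * r ^ k = r ^ N * (1 - r)⁻¹ := by
      rw [tsum_mul_left, tsum_geometric_of_lt_one hr0.le hr1]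
    calc ∑' k, F (k + N) ≤ r ^ N * (1 - r)⁻¹ := h1.trans_eq h2
      _ ≤ h ^ α * (1 - r)⁻¹ := mul_le_mul_of_nonneg_right hrN (by positivity)
      _ = (1 - r)⁻¹ * h ^ α := by ring
  have hhead : ∑ k ∈ Finset.range N, F k ≤ sB / (sB - 1) * h ^ α := by
    rcases Nat.eq_zero_or_pos N with hN0 | hN0
    · rw [hN0]
      simp only [Finset.range_zero, Finset.sum_empty]
      exact mul_nonneg (div_nonneg hsB0.le hsB1.le) (Real.rpow_nonneg h0.le _)
    · obtain ⟨m, rfl⟩ : ∃ m, N = m + 1 := ⟨N - 1, (Nat.succ_pred_eq_of_pos hN0).symm⟩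
      have hN' : h < B⁻¹ ^ m := hNmin m m.lt_succ_self
      have step1 : ∑ k ∈ Finset.range (m+1), F k ≤ ∑ k ∈ Finset.range (m+1), sB ^ k * h :=
        Finset.sum_le_sum fun k _ => gg_diff_le_lip hb1 k x y
      have step2 : ∑ k ∈ Finset.range (m+1), sB ^ k * h ≤ sB ^ (m+1) / (sB - 1) * h := by
        rw [← Finset.sum_mul]
        apply mul_le_mul_of_nonneg_right _ h0.le
        rw [geom_sum_eq (by linarith : sB ≠ 1)]
        gcongr
        linarith
      have hsplit_h : h = h ^ α * h ^ (1-α) := by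
        rw [← Real.rpow_add h0]; norm_num
      have hh1 : h ^ (1-α) ≤ (sB⁻¹) ^ m := by
        calc h ^ (1-α) ≤ (B⁻¹ ^ m) ^ (1-α) :=
              Real.rpow_le_rpow h0.le hN'.le (by linarith)
          _ = ((B⁻¹) ^ (1-α)) ^ m := pow_rpow_comm hBinv0 m _
          _ = (sB⁻¹) ^ m := by rw [Real.inv_rpow hB0.le]
      have hcan : sB ^ (m+1) * (sB⁻¹) ^ m = sB := by
        rw [inv_pow]
        field_simp [pow_succ]
        exact pow_succ sB m
      have step3 : sB ^ (m+1) / (sB - 1) * h ≤ sB / (sB - 1) * h ^ α := by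
        have hkey : sB ^ (m+1) * h ≤ sB * h ^ α := by
          calc sB ^ (m+1) * h = sB ^ (m+1) * (h ^ α * h ^ (1-α)) := by
                rw [← hsplit_h]
            _ = sB ^ (m+1) * h ^ (1-α) * h ^ α := by ring
            _ ≤ sB ^ (m+1) * (sB⁻¹) ^ m * h ^ α := by
                gcongr
            _ = sB * h ^ α := by rw [hcan]
        rw [div_mul_eq_mul_div, div_mul_eq_mul_div]
        exact (div_le_div_iff_of_pos_right hsB1).2 hkey
      linarith
  calc |Phi b α x - Phi b α y| ≤ ∑' k, F k := hdiff
    _ = ∑ k ∈ Finset.range N, F k + ∑' k, F (k + N) := hsplit.symm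
    _ ≤ sB / (sB - 1) * h ^ α + (1 - r)⁻¹ * h ^ α := add_le_add hhead htail
    _ = (sB / (sB - 1) + (1 - r)⁻¹) * h ^ α := by ring

lemma phi_osc {b : ℕ} {α : ℝ} (hb1 : 1 < (b : ℝ)) (hbe : Even b) (hα0 : 0 < α)
    (hb2 : 2 < (b : ℝ) ^ (1 - α)) (n : ℕ) (j : ℤ) :
    ((b:ℝ) ^ (1-α) - 2) / ((b:ℝ) ^ (1-α) - 1) * ((b:ℝ) ^ (-α)) ^ n ≤
      |Phi b α (((j:ℝ) + 1) * ((b:ℝ)⁻¹) ^ n) - Phi b α ((j:ℝ) * ((b:ℝ)⁻¹) ^ n)| := by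
  set B : ℝ := (b : ℝ) with hB
  have hB0 : (0:ℝ) < B := lt_trans one_pos hb1
  set r : ℝ := B ^ (-α) with hr
  set sB : ℝ := B ^ (1 - α) with hsB
  have hr0 : 0 < r := r_pos hb1
  have hsB0 : 0 < sB := Real.rpow_pos_of_pos hB0 _
  have hsB1 : (0:ℝ) < sB - 1 := by linarith
  set u : ℝ := (j:ℝ) * (B⁻¹) ^ n with hu
  set v : ℝ := ((j:ℝ) + 1) * (B⁻¹) ^ n with hv
  set d : ℕ → ℝ := fun k => gg b α k v - gg b α k u with hd
  -- arguments for k ≥ n are integers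
  have harg : ∀ k, n ≤ k → ∀ i : ℤ, B ^ k * ((i:ℝ) * (B⁻¹) ^ n) = ((i * (b:ℤ) ^ (k - n) : ℤ) : ℝ) := by
    intro k hk i
    have h1 : B ^ k * (B⁻¹) ^ n = B ^ (k - n) := by
      rw [inv_pow, pow_sub₀ B (ne_of_gt hB0) hk]
    push_cast
    rw [show B ^ k * ((i:ℝ) * (B⁻¹)^n) = (i:ℝ) * (B ^ k * (B⁻¹)^n) by ring, h1]
  have hzero : ∀ k ∉ Finset.range (n+1), d k = 0 := by
    intro k hk
    rw [Finset.mem_range, not_lt] at hk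
    have hk' : n ≤ k := le_trans (Nat.le_succ n) hk
    have heven : Even ((b:ℤ) ^ (k - n)) := by
      exact ((Int.even_coe_nat b).2 hbe).pow_of_ne_zero (by omega)
    have e1 : sawtooth (B ^ k * u) = 0 := by
      rw [hu, harg k hk' j]
      exact sawtooth_int_even (heven.mul_left j)
    have e2 : sawtooth (B ^ k * v) = 0 := by
      have : v = ((j:ℝ) + 1) * (B⁻¹) ^ n := hv
      rw [hv, show ((j:ℝ) + 1) = ((j + 1 : ℤ) : ℝ) by push_cast; ring, harg k hk' (j+1)]
      exact sawtooth_int_even (heven.mul_left (j+1))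
    simp only [hd, gg, ← hB, e1, e2, mul_zero, sub_zero]
  have hBn : B ^ n * (B⁻¹) ^ n = 1 := by
    rw [inv_pow, mul_inv_cancel₀ (pow_ne_zero n (ne_of_gt hB0))]
  have hdn : |d n| = r ^ n := by
    have e1 : B ^ n * u = (j:ℝ) := by rw [hu]; rw [show B ^ n * ((j:ℝ) * (B⁻¹)^n) = (j:ℝ) * (B^n * (B⁻¹)^n) by ring, hBn, mul_one]
    have e2 : B ^ n * v = (j:ℝ) + 1 := by rw [hv]; rw [show B ^ n * (((j:ℝ)+1) * (B⁻¹)^n) = ((j:ℝ)+1) * (B^n * (B⁻¹)^n) by ring, hBn, mul_one]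
    rw [hd]
    simp only [gg, ← hB, ← hr, e1, e2, ← mul_sub, abs_mul, abs_of_nonneg (pow_nonneg hr0.le n),
      sawtooth_succ_int j, mul_one]
  have hhead : |∑ k ∈ Finset.range n, d k| ≤ r ^ n / (sB - 1) := by
    have hvu : |v - u| = (B⁻¹) ^ n := by
      rw [hv, hu, show ((j:ℝ)+1) * (B⁻¹)^n - (j:ℝ) * (B⁻¹)^n = (B⁻¹)^n by ring]
      exact abs_of_nonneg (pow_nonneg (by positivity) n)
    calc |∑ k ∈ Finset.range n, d k| ≤ ∑ k ∈ Finset.range n, |d k| :=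
          Finset.abs_sum_le_sum_abs _ _
      _ ≤ ∑ k ∈ Finset.range n, sB ^ k * (B⁻¹) ^ n := by
          refine Finset.sum_le_sum fun k _ => ?_
          have := gg_diff_le_lip hb1 (α := α) k v u
          rw [hvu] at this
          exact this
      _ = (∑ k ∈ Finset.range n, sB ^ k) * (B⁻¹) ^ n := by rw [Finset.sum_mul]
      _ ≤ sB ^ n / (sB - 1) * (B⁻¹) ^ n := by
          apply mul_le_mul_of_nonneg_right _ (pow_nonneg (by positivity) n)
          rw [geom_sum_eq (by linarith : sB ≠ 1)]
          gcongr
          linarith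
      _ = r ^ n / (sB - 1) := by
          rw [div_mul_eq_mul_div, ← mul_pow]
          congr 2
          rw [hsB, hr, show (1:ℝ) - α = 1 + (-α) by ring, Real.rpow_add hB0, Real.rpow_one]
          field_simp
  have htsum : Phi b α v - Phi b α u = ∑ k ∈ Finset.range (n+1), d k := by
    rw [phi_eq, phi_eq, ← Summable.tsum_sub (summable_gg hb1 hα0 v) (summable_gg hb1 hα0 u)]
    exact tsum_eq_sum hzero
  rw [htsum, Finset.sum_range_succ]
  have habs := abs_add_le (∑ k ∈ Finset.range n, d k) (d n)
  have h1 : |d n| - |∑ k ∈ Finset.range n, d k| ≤ |∑ k ∈ Finset.range n, d k + d n| := by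
    have := abs_sub_abs_le_abs_sub (d n) (-(∑ k ∈ Finset.range n, d k))
    simp only [abs_neg, sub_neg_eq_add] at this
    calc |d n| - |∑ k ∈ Finset.range n, d k| ≤ |d n + ∑ k ∈ Finset.range n, d k| := this
      _ = |∑ k ∈ Finset.range n, d k + d n| := by rw [add_comm]
  have hfinal : (sB - 2) / (sB - 1) * r ^ n = r ^ n - r ^ n / (sB - 1) := by
    field_simp
    ring
  rw [hfinal]
  calc r ^ n - r ^ n / (sB - 1) ≤ |d n| - |∑ k ∈ Finset.range n, d k| := by
        rw [hdn]; linarith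
    _ ≤ _ := h1


/-- If `0 < α < 1`, `b` is an even positive integer, and `b^{1-α} > 2`, then `Φ` is
strictly `C^{0,α}` on `ℝ`. -/
theorem phi_strictlyHolder (α : ℝ) (hα0 : 0 < α) (hα1 : α < 1) (b : ℕ) (hb : 0 < b)
    (hbe : Even b) (hb2 : 2 < (b : ℝ) ^ (1 - α)) :
    StrictlyHolder (Phi b α) α := by
  have hb1 : 1 < (b : ℝ) := by
    by_contra hcon
    push_neg at hcon
    have : (b:ℝ) ^ (1 - α) ≤ 1 :=
      Real.rpow_le_one (by positivity) hcon (by linarith)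
    linarith
  set B : ℝ := (b : ℝ) with hB
  have hB0 : (0:ℝ) < B := lt_trans one_pos hb1
  set r : ℝ := B ^ (-α) with hr
  set sB : ℝ := B ^ (1 - α) with hsB
  have hr0 : 0 < r := r_pos hb1
  have hsB1 : (0:ℝ) < sB - 1 := by linarith
  set c : ℝ := (sB - 2) / (sB - 1) with hc
  have hc0 : 0 < c := div_pos (by linarith) hsB1
  constructor
  · exact phi_holder hb1 hα0 hα1 hb2
  intro β hβ y M
  set K : ℝ := B ^ (β - α) with hK
  have hK1 : 1 < K := by
    rw [hK, show (1:ℝ) = B ^ (0:ℝ) by rw [Real.rpow_zero]]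
    exact Real.rpow_lt_rpow_of_exponent_lt hb1 (by linarith)
  have hBinv : B⁻¹ < 1 := inv_lt_one_of_one_lt₀ hb1
  have hBinv0 : (0:ℝ) ≤ B⁻¹ := by positivity
  rw [Filter.frequently_iff]
  intro U hU
  rw [Metric.mem_nhdsWithin_iff] at hU
  obtain ⟨ε, hε, hsub⟩ := hU
  -- choose n
  obtain ⟨n₁, hn₁⟩ := exists_pow_lt_of_lt_one hε hBinv
  obtain ⟨n₂, hn₂⟩ := pow_unbounded_of_one_lt (2 * M / c) hK1
  set n := max n₁ n₂ with hn
  have hεn : (B⁻¹) ^ n < ε :=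
    lt_of_le_of_lt (pow_le_pow_of_le_one hBinv0 hBinv.le (le_max_left _ _)) hn₁
  have hMn : M < c / 2 * K ^ n := by
    have h1 : K ^ n₂ ≤ K ^ n := pow_le_pow_right₀ hK1.le (le_max_right _ _)
    have h2 : 2 * M / c < K ^ n := lt_of_lt_of_le hn₂ h1
    calc M = c / 2 * (2 * M / c) := by field_simp
      _ < c / 2 * K ^ n := by
        apply mul_lt_mul_of_pos_left h2
        positivity
  -- grid points
  set j : ℤ := ⌊B ^ n * y⌋ with hj
  set u : ℝ := (j:ℝ) * (B⁻¹) ^ n with hu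
  set v : ℝ := ((j:ℝ) + 1) * (B⁻¹) ^ n with hv
  have hBn0 : (0:ℝ) < (B⁻¹) ^ n := by positivity
  have hBn : B ^ n * (B⁻¹) ^ n = 1 := by
    rw [inv_pow, mul_inv_cancel₀ (pow_ne_zero n (ne_of_gt hB0))]
  have huy : u ≤ y := by
    have h1 : (j:ℝ) ≤ B ^ n * y := Int.floor_le _
    calc u = (j:ℝ) * (B⁻¹) ^ n := hu
      _ ≤ (B ^ n * y) * (B⁻¹) ^ n := mul_le_mul_of_nonneg_right h1 hBn0.le
      _ = y * (B ^ n * (B⁻¹) ^ n) := by ring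
      _ = y := by rw [hBn, mul_one]
  have hyv : y < v := by
    have h1 : B ^ n * y < (j:ℝ) + 1 := Int.lt_floor_add_one _
    calc y = (B ^ n * y) * (B⁻¹) ^ n := by
          rw [show (B ^ n * y) * (B⁻¹) ^ n = y * (B ^ n * (B⁻¹) ^ n) by ring, hBn, mul_one]
      _ < ((j:ℝ) + 1) * (B⁻¹) ^ n := mul_lt_mul_of_pos_right h1 hBn0
  have hvu : v - u = (B⁻¹) ^ n := by rw [hv, hu]; ring
  have hosc : c * r ^ n ≤ |Phi b α v - Phi b α u| := phi_osc hb1 hbe hα0 hb2 n j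
  -- pick the point x
  have hpick : ∃ x : ℝ, x ≠ y ∧ |x - y| ≤ (B⁻¹) ^ n ∧
      c / 2 * r ^ n ≤ |Phi b α x - Phi b α y| := by
    have hcr : c / 2 * r ^ n ≤ c * r ^ n / 2 + 0 := by
      rw [add_zero, div_mul_eq_mul_div]
    rcases eq_or_ne y u with hyu | hyu
    · refine ⟨v, ne_of_gt hyv, ?_, ?_⟩
      · rw [abs_of_pos (by linarith : (0:ℝ) < v - y), hyu, hvu]
      · rw [hyu]
        calc c / 2 * r ^ n ≤ c * r ^ n := by
              apply mul_le_mul_of_nonneg_right _ (pow_nonneg hr0.le n)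
              linarith
          _ ≤ _ := hosc
    · have htri : |Phi b α v - Phi b α u| ≤
          |Phi b α v - Phi b α y| + |Phi b α u - Phi b α y| := by
        calc |Phi b α v - Phi b α u| ≤
              |Phi b α v - Phi b α y| + |Phi b α y - Phi b α u| := abs_sub_le _ _ _
          _ = |Phi b α v - Phi b α y| + |Phi b α u - Phi b α y| := by
              rw [abs_sub_comm (Phi b α y)]
      rcases le_total (c / 2 * r ^ n) (|Phi b α v - Phi b α y|) with hcase | hcase
      · refine ⟨v, ne_of_gt hyv, ?_, hcase⟩
        rw [abs_of_pos (by linarith : (0:ℝ) < v - y)]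
        linarith
      · refine ⟨u, fun h => hyu h.symm, ?_, ?_⟩
        · rw [abs_of_nonpos (by linarith : u - y ≤ 0)]
          linarith
        · have : c * r ^ n ≤ |Phi b α v - Phi b α y| + |Phi b α u - Phi b α y| :=
            le_trans hosc htri
          nlinarith [pow_nonneg hr0.le n]
  obtain ⟨x, hxy, hxle, hxge⟩ := hpick
  refine ⟨x, hsub ⟨?_, hxy⟩, ?_⟩
  · rw [Metric.mem_ball, Real.dist_eq]
    exact lt_of_le_of_lt hxle hεn
  -- the quotient estimate
  have hp0 : 0 < |x - y| ^ β := Real.rpow_pos_of_pos (abs_pos.2 (sub_ne_zero.2 hxy)) _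
  rw [lt_div_iff₀ hp0]
  have hβ0 : (0:ℝ) ≤ β := by linarith
  have hpB : |x - y| ^ β ≤ ((B⁻¹) ^ β) ^ n := by
    rw [← pow_rpow_comm hBinv0]
    exact Real.rpow_le_rpow (abs_nonneg _) hxle hβ0
  have hid : K * (B⁻¹) ^ β = r := by
    rw [hK, Real.inv_rpow hB0.le, ← Real.rpow_neg hB0.le, hr, ← Real.rpow_add hB0]
    ring_nf
  have hcK : (0:ℝ) ≤ c / 2 * K ^ n := by positivity
  calc M * |x - y| ^ β < (c / 2 * K ^ n) * |x - y| ^ β :=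
        mul_lt_mul_of_pos_right hMn hp0
    _ ≤ (c / 2 * K ^ n) * ((B⁻¹) ^ β) ^ n := mul_le_mul_of_nonneg_left hpB hcK
    _ = c / 2 * r ^ n := by rw [mul_assoc, ← mul_pow, hid]
    _ ≤ |Phi b α x - Phi b α y| := hxge
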